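/- For any integers p ≥ 1 and 2 ≤ l ≤ 2p, the identity Σ_{k=0}^{⌊l/2⌋} (p! / (k!·(k+p−l)!·(l−2k)!)) · 2^{l−2k} = C(2p, l) holds, where terms with a negative factorial argument are taken to be zero. -/
import Mathlib
open Polynomial Finset

lemma coeff_two_X_add_one_pow (m i : ℕ) :
    ((2*X + 1 : ℕ[X])^m).coeff i = 2^i * m.choose i := by
  have h2 : (2:ℕ[X]) = ((2:ℕ):ℕ[X]) := by norm_num
  rw [add_pow, finset_sum_coeff]
  simp only [one_pow, mul_one, mul_pow, mul_assoc, h2,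
    ← Nat.cast_pow, coeff_natCast_mul, coeff_mul_natCast, coeff_X_pow]
  rw [Finset.sum_eq_single i]
  · simp
  · intro b _ hb; simp [hb.symm]
  · intro h
    simp only [Finset.mem_range, not_lt] at h
    simp [Nat.choose_eq_zero_of_lt h]

lemma key (p l : ℕ) (hl : l ≤ 2*p) :
    ∑ k ∈ Finset.range (l/2+1), p.choose k * ((p-k).choose (l-2*k) * 2^(l-2*k))
      = (2*p).choose l := by
  have h := coeff_one_add_X_pow ℕ (2*p) l
  have he : ((1+X:ℕ[X]))^(2*p) = ((X:ℕ[X])^2 + (2*X+1))^p := by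
    rw [pow_mul, show ((1+X:ℕ[X])^2) = (X:ℕ[X])^2+(2*X+1) by ring]
  rw [he, add_pow, finset_sum_coeff] at h
  simp only [← pow_mul, mul_assoc, coeff_X_pow_mul', coeff_mul_natCast,
    coeff_two_X_add_one_pow, Nat.cast_id] at h
  rw [← h]
  have hsub : Finset.range (l/2+1) ⊆ Finset.range (p+1) := by
    intro x hx; simp only [Finset.mem_range] at *; omega
  rw [← Finset.sum_subset hsub fun x hx hx2 => by
    simp only [Finset.mem_range] at hx hx2
    exact if_neg (by omega)]
  refine Finset.sum_congr rfl fun k hk => ?_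
  simp only [Finset.mem_range] at hk
  rw [if_pos (by omega)]; ring

theorem trinomial_sum_identity (p l : ℕ) (hp : 1 ≤ p) (hl2 : 2 ≤ l) (hl : l ≤ 2 * p) :
    ∑ k ∈ Finset.range (l / 2 + 1),
      (if l ≤ k + p then
        Nat.factorial p /
          (Nat.factorial k * Nat.factorial (k + p - l) * Nat.factorial (l - 2 * k)) *
          2 ^ (l - 2 * k)
      else 0) = Nat.choose (2 * p) l := by
  rw [← key p l hl]
  refine Finset.sum_congr rfl fun k hk => ?_
  simp only [Finset.mem_range] at hk
  have h2k : 2 * k ≤ l := by omega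
  by_cases hkl : l ≤ k + p
  · rw [if_pos hkl]
    have hkp : k ≤ p := by omega
    have hlk : l - 2 * k ≤ p - k := by omega
    have e1 := Nat.choose_mul_factorial_mul_factorial hkp
    have e2 := Nat.choose_mul_factorial_mul_factorial hlk
    have h3 : p - k - (l - 2 * k) = k + p - l := by omega
    have hfac : p.choose k * (p - k).choose (l - 2 * k) *
        (k.factorial * (k + p - l).factorial * (l - 2 * k).factorial) = p.factorial := by
      rw [← h3, ← e1, ← e2]; ring
    have hD : 0 < k.factorial * (k + p - l).factorial * (l - 2 * k).factorial :=
      Nat.mul_pos (Nat.mul_pos (Nat.factorial_pos _) (Nat.factorial_pos _)) (Nat.factorial_pos _)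
    rw [← hfac, Nat.mul_div_cancel _ hD]; ring
  · rw [if_neg hkl]
    rcases le_or_gt k p with h | h
    · rw [Nat.choose_eq_zero_of_lt (show p - k < l - 2 * k by omega)]; ring
    · rw [Nat.choose_eq_zero_of_lt h]; ring
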